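/- Suppose h ∈ 𝓗. Then the Kullback–Leibler divergence J is differentiable at ϑ₀ with J′(ϑ₀) = A·h, where A = 1 − (λ₀/S)·ln(1 + S/λ₀); moreover A > 0. In particular, ∫_{0}^{1} S·κ·x^{κ−1}·(h·x^κ)/(S·x^κ + λ₀) dx = h·(1 − (λ₀/S)·ln(1 + S/λ₀)). -/

import Mathlib

open MeasureTheory Real Set Filter

/-- The cusp signal shape: `ψ(x) = (x/δ)^κ` for `0 < x < δ`, `1` for `x ≥ δ`, `0` for `x ≤ 0`. -/
noncomputable def psi (δ κ : ℝ) (x : ℝ) : ℝ :=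
  if δ ≤ x then 1 else if 0 < x then (x / δ) ^ κ else 0

/-- Theoretical intensity `λ(ϑ, t) = S ψ(t − ϑ) + λ₀`. -/
noncomputable def lamT (S lam0 δ κ : ℝ) (ϑ t : ℝ) : ℝ :=
  S * psi δ κ (t - ϑ) + lam0

/-- Real intensity `λ*(ϑ₀, t) = (S + h) ψ(t − ϑ₀) + λ₀`. -/
noncomputable def lamR (S h lam0 δ κ : ℝ) (ϑ₀ t : ℝ) : ℝ :=
  (S + h) * psi δ κ (t - ϑ₀) + lam0

/-- The Kullback–Leibler divergence `J(ϑ)`. -/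
noncomputable def JKL (S h lam0 δ κ τ ϑ₀ : ℝ) (ϑ : ℝ) : ℝ :=
  ∫ t in (min ϑ ϑ₀)..τ,
    (lamT S lam0 δ κ ϑ t / lamR S h lam0 δ κ ϑ₀ t - 1 -
      Real.log (lamT S lam0 δ κ ϑ t / lamR S h lam0 δ κ ϑ₀ t)) *
      lamR S h lam0 δ κ ϑ₀ t

section psilemmas
variable {δ κ : ℝ} (hδ : 0 < δ) (hκ : 0 < κ)
include hδ hκ

lemma psi_eq (x : ℝ) : psi δ κ x = (min (max x 0) δ / δ) ^ κ := by
  unfold psi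
  rcases le_or_gt δ x with hx | hx
  · rw [if_pos hx, max_eq_left (hδ.le.trans hx), min_eq_right hx, div_self hδ.ne',
      Real.one_rpow]
  · rw [if_neg (not_le.mpr hx)]
    rcases lt_or_ge 0 x with h0 | h0
    · rw [if_pos h0, max_eq_left h0.le, min_eq_left hx.le]
    · rw [if_neg (not_lt.mpr h0), max_eq_right h0, min_eq_left hδ.le, zero_div,
        Real.zero_rpow hκ.ne']

lemma psi_cont : Continuous (psi δ κ) := by
  have : Continuous fun x : ℝ => (min (max x 0) δ / δ) ^ κ := by
    rw [continuous_iff_continuousAt]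
    intro x
    exact (Real.continuousAt_rpow_const _ _ (Or.inr hκ.le)).comp (by fun_prop)
  simpa [funext fun x => psi_eq hδ hκ x] using this

lemma psi_nonneg (x : ℝ) : 0 ≤ psi δ κ x := by
  rw [psi_eq hδ hκ]
  exact Real.rpow_nonneg (by positivity) κ

lemma psi_le_one (x : ℝ) : psi δ κ x ≤ 1 := by
  rw [psi_eq hδ hκ]
  exact Real.rpow_le_one (by positivity) (by
    rw [div_le_one hδ]; exact min_le_right _ _) hκ.le

lemma psi_mono : Monotone (psi δ κ) := by
  intro x y hxy
  rw [psi_eq hδ hκ, psi_eq hδ hκ]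
  apply Real.rpow_le_rpow (by positivity) _ hκ.le
  gcongr

lemma psi_of_nonpos {x : ℝ} (hx : x ≤ 0) : psi δ κ x = 0 := by
  rw [psi_eq hδ hκ, max_eq_right hx, min_eq_left hδ.le, zero_div, Real.zero_rpow hκ.ne']

lemma psi_of_ge {x : ℝ} (hx : δ ≤ x) : psi δ κ x = 1 := by
  rw [psi_eq hδ hκ, max_eq_left (hδ.le.trans hx), min_eq_right hx, div_self hδ.ne',
    Real.one_rpow]

lemma psi_le_rpow (x : ℝ) : psi δ κ x ≤ (|x| / δ) ^ κ := by
  rw [psi_eq hδ hκ]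
  apply Real.rpow_le_rpow (by positivity) _ hκ.le
  gcongr
  exact min_le_of_left_le (max_le (le_abs_self x) (abs_nonneg x))
end psilemmas

lemma rpow_sub_rpow_le {κ a b : ℝ} (hκ0 : 0 < κ) (hκ1 : κ ≤ 1) (ha : 0 ≤ a) (hab : a ≤ b) :
    b ^ κ - a ^ κ ≤ (b - a) ^ κ := by
  have hba : (0:ℝ) ≤ b - a := by linarith
  have key := NNReal.rpow_add_le_add_rpow a.toNNReal (b - a).toNNReal hκ0.le hκ1
  have key' : ((a.toNNReal + (b - a).toNNReal) ^ κ : NNReal) ≤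
      (a.toNNReal ^ κ + (b - a).toNNReal ^ κ : NNReal) := key
  have := (NNReal.coe_le_coe).2 key'
  simp only [NNReal.coe_rpow, NNReal.coe_add, Real.coe_toNNReal a ha,
    Real.coe_toNNReal (b - a) hba] at this
  have hb : a + (b - a) = b := by ring
  rw [hb] at this
  linarith

lemma psi_holder {δ κ : ℝ} (hδ : 0 < δ) (hκ0 : 0 < κ) (hκ1 : κ ≤ 1) (x y : ℝ) :
    |psi δ κ x - psi δ κ y| ≤ (|x - y| / δ) ^ κ := by
  -- wlog-free: prove for ordered pairs
  have key : ∀ a b : ℝ, b ≤ a → psi δ κ a - psi δ κ b ≤ ((a - b) / δ) ^ κ := by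
    intro a b hba
    set ma := min (max a 0) δ with hma
    set mb := min (max b 0) δ with hmb
    have h0b : 0 ≤ mb := by positivity
    have hmm : mb ≤ ma := min_le_min (max_le_max hba le_rfl) le_rfl
    have hlip : ma - mb ≤ a - b := by
      have h1 : max a 0 ≤ max b 0 + (a - b) := by
        rcases le_total a 0 with h | h
        · simp only [max_eq_right h]
          linarith [le_max_right b (0:ℝ)]
        · rw [max_eq_left h]
          have := le_max_left b (0:ℝ)
          linarith [le_max_left b (0:ℝ)]
      have h2 : ma ≤ mb + (a - b) := by
        rw [hma, hmb]
        refine le_trans (min_le_min h1 (by linarith : δ ≤ δ + (a - b))) ?_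
        rw [← min_add_add_right]
      linarith
    rw [psi_eq hδ hκ0, psi_eq hδ hκ0, ← hma, ← hmb]
    have step : (ma / δ) ^ κ - (mb / δ) ^ κ ≤ ((ma - mb) / δ) ^ κ := by
      have := rpow_sub_rpow_le hκ0 hκ1 (by positivity : (0:ℝ) ≤ mb / δ)
        (by gcongr : mb / δ ≤ ma / δ)
      calc (ma / δ) ^ κ - (mb / δ) ^ κ ≤ (ma / δ - mb / δ) ^ κ := this
        _ = ((ma - mb) / δ) ^ κ := by rw [sub_div]
    refine step.trans ?_
    apply Real.rpow_le_rpow (div_nonneg (by linarith) hδ.le) _ hκ0.le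
    gcongr
  rcases le_total y x with h | h
  · rw [abs_of_nonneg (by linarith [psi_mono hδ hκ0 h] : (0:ℝ) ≤ psi δ κ x - psi δ κ y),
      abs_of_nonneg (by linarith : (0:ℝ) ≤ x - y)]
    exact key x y h
  · rw [abs_of_nonpos (by linarith [psi_mono hδ hκ0 h] : psi δ κ x - psi δ κ y ≤ 0),
      abs_of_nonpos (by linarith : x - y ≤ 0)]
    have := key y x h
    rw [neg_sub, neg_sub]
    simpa using this

noncomputable def Gfun (S lam0 h : ℝ) (y : ℝ) : ℝ :=
  -h * y + (h * lam0 / S) * (Real.log (S * y + lam0) - Real.log lam0)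

lemma Gfun_zero (S lam0 h : ℝ) : Gfun S lam0 h 0 = 0 := by simp [Gfun]

lemma Gfun_one {S lam0 h : ℝ} (hS : 0 < S) (hlam0 : 0 < lam0) :
    Gfun S lam0 h 1 = -((1 - (lam0 / S) * Real.log (1 + S / lam0)) * h) := by
  have h1 : (1 : ℝ) + S / lam0 = (S * 1 + lam0) / lam0 := by field_simp; ring
  rw [Gfun, h1, Real.log_div (by positivity) hlam0.ne']
  ring

lemma Gfun_abs_le {S lam0 h : ℝ} (hS : 0 < S) (hlam0 : 0 < lam0) {y : ℝ} (hy : 0 ≤ y) :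
    |Gfun S lam0 h y| ≤ 2 * |h| * y := by
  have hb : (0:ℝ) < S * y + lam0 := by positivity
  have hlog0 : 0 ≤ Real.log (S * y + lam0) - Real.log lam0 := by
    have := Real.log_le_log hlam0 (by linarith [mul_nonneg hS.le hy] : lam0 ≤ S * y + lam0)
    linarith
  have hlogle : Real.log (S * y + lam0) - Real.log lam0 ≤ S * y / lam0 := by
    have hdiv : Real.log ((S * y + lam0) / lam0) ≤ (S * y + lam0) / lam0 - 1 :=
      Real.log_le_sub_one_of_pos (by positivity)
    rw [Real.log_div hb.ne' hlam0.ne'] at hdiv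
    have heq : (S * y + lam0) / lam0 - 1 = S * y / lam0 := by field_simp; ring
    linarith [hdiv.trans_eq heq]
  rw [Gfun]
  calc |(-h) * y + h * lam0 / S * (Real.log (S * y + lam0) - Real.log lam0)|
      ≤ |(-h) * y| + |h * lam0 / S * (Real.log (S * y + lam0) - Real.log lam0)| := abs_add_le _ _
    _ = |h| * y + (|h| * lam0 / S) * (Real.log (S * y + lam0) - Real.log lam0) := by
        rw [abs_mul, abs_mul, abs_neg, abs_of_nonneg hy, abs_of_nonneg hlog0, abs_div,
          abs_mul, abs_of_nonneg hlam0.le, abs_of_nonneg hS.le]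
    _ ≤ |h| * y + (|h| * lam0 / S) * (S * y / lam0) := by
        gcongr
    _ = 2 * |h| * y := by field_simp; ring

-- core algebraic identity
lemma pointwise_id {S lam0 h : ℝ} (hS : 0 < S) (hlam0 : 0 < lam0) (hSh : 0 < S + h)
    {p q : ℝ} (hp : 0 ≤ p) (hq : 0 ≤ q) :
    ((S * p + lam0) / ((S + h) * q + lam0) - 1 -
        Real.log ((S * p + lam0) / ((S + h) * q + lam0))) * ((S + h) * q + lam0) -
      ((S * q + lam0) / ((S + h) * q + lam0) - 1 -
        Real.log ((S * q + lam0) / ((S + h) * q + lam0))) * ((S + h) * q + lam0) =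
    (Gfun S lam0 h p - Gfun S lam0 h q) +
      ((S + h) / S) * ((S * p + lam0) - (S * q + lam0) -
        (S * q + lam0) * (Real.log (S * p + lam0) - Real.log (S * q + lam0))) := by
  have hb : (0:ℝ) < S * p + lam0 := by positivity
  have ha : (0:ℝ) < S * q + lam0 := by positivity
  have hm : (0:ℝ) < (S + h) * q + lam0 := by
    have := mul_nonneg hSh.le hq; linarith
  rw [Real.log_div hb.ne' hm.ne', Real.log_div ha.ne' hm.ne', Gfun, Gfun]
  field_simp
  ring

-- error bound for the remainder
lemma err_bound {S lam0 : ℝ} (hS : 0 < S) (hlam0 : 0 < lam0)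
    {p q : ℝ} (hp : 0 ≤ p) (hq : 0 ≤ q) :
    |(S * p + lam0) - (S * q + lam0) -
        (S * q + lam0) * (Real.log (S * p + lam0) - Real.log (S * q + lam0))| ≤
      S ^ 2 * (p - q) ^ 2 / lam0 := by
  have hb : (0:ℝ) < S * p + lam0 := by positivity
  have ha : (0:ℝ) < S * q + lam0 := by positivity
  set a := S * q + lam0
  set b := S * p + lam0
  have hlog1 : Real.log b - Real.log a ≤ b / a - 1 := by
    have := Real.log_le_sub_one_of_pos (show (0:ℝ) < b / a by positivity)
    rwa [Real.log_div hb.ne' ha.ne'] at this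
  have hlog2 : Real.log a - Real.log b ≤ a / b - 1 := by
    have := Real.log_le_sub_one_of_pos (show (0:ℝ) < a / b by positivity)
    rwa [Real.log_div ha.ne' hb.ne'] at this
  have e1 : a * (b / a - 1) = b - a := by field_simp
  have h1 : a * (Real.log b - Real.log a) ≤ b - a := by
    rw [← e1]; exact mul_le_mul_of_nonneg_left hlog1 ha.le
  have key1 : 0 ≤ b - a - a * (Real.log b - Real.log a) := by nlinarith [h1]
  have e3 : b - a + a * (a / b - 1) = (b - a) ^ 2 / b := by field_simp; ring
  have h2 : a * (Real.log a - Real.log b) ≤ a * (a / b - 1) :=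
    mul_le_mul_of_nonneg_left hlog2 ha.le
  have key2 : b - a - a * (Real.log b - Real.log a) ≤ (b - a) ^ 2 / b := by nlinarith [h2, e3]
  have key3 : (b - a) ^ 2 / b ≤ (b - a) ^ 2 / lam0 := by
    apply div_le_div_of_nonneg_left (by positivity) hlam0 (by simp [b]; nlinarith)
  have hba : (b - a) ^ 2 = S ^ 2 * (p - q) ^ 2 := by simp [a, b]; ring
  rw [abs_of_nonneg key1]
  calc b - a - a * (Real.log b - Real.log a) ≤ (b - a) ^ 2 / b := key2
    _ ≤ (b - a) ^ 2 / lam0 := key3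
    _ = S ^ 2 * (p - q) ^ 2 / lam0 := by rw [hba]

-- bound for the integrand when q = 0 (sliver)
lemma sliver_bound {S lam0 : ℝ} (hS : 0 < S) (hlam0 : 0 < lam0) {p : ℝ} (hp : 0 ≤ p) :
    |((S * p + lam0) / lam0 - 1 - Real.log ((S * p + lam0) / lam0)) * lam0| ≤ S * p := by
  have hb : (0:ℝ) < S * p + lam0 := by positivity
  have hlog0 : 0 ≤ Real.log ((S * p + lam0) / lam0) := by
    apply Real.log_nonneg
    rw [le_div_iff₀ hlam0]; nlinarith
  have hlog1 : Real.log ((S * p + lam0) / lam0) ≤ (S * p + lam0) / lam0 - 1 :=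
    Real.log_le_sub_one_of_pos (by positivity)
  have hval : ((S * p + lam0) / lam0 - 1 - Real.log ((S * p + lam0) / lam0)) * lam0 ≤
      ((S * p + lam0) / lam0 - 1) * lam0 := by nlinarith
  have hval2 : ((S * p + lam0) / lam0 - 1) * lam0 = S * p := by field_simp; ring
  have hnn : 0 ≤ ((S * p + lam0) / lam0 - 1 - Real.log ((S * p + lam0) / lam0)) * lam0 := by
    nlinarith
  rw [abs_of_nonneg hnn]
  linarith

lemma shift_integral {F : ℝ → ℝ} (hF : Continuous F) (c τ u : ℝ) :
    (∫ t in c..τ, F (t - c - u)) - ∫ t in c..τ, F (t - c) =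
      (∫ t in c - u..c, F (t - c)) - ∫ t in τ - u..τ, F (t - c) := by
  have hg : Continuous fun t => F (t - c) := hF.comp (by fun_prop)
  have hint : ∀ a b : ℝ, IntervalIntegrable (fun t => F (t - c)) volume a b :=
    fun a b => hg.intervalIntegrable a b
  have h1 : (∫ t in c..τ, F (t - c - u)) = ∫ t in c - u..τ - u, F (t - c) := by
    have := intervalIntegral.integral_comp_sub_right (a := c) (b := τ) (fun t => F (t - c)) u
    simp only [sub_sub, sub_right_comm] at this ⊢
    rw [← this]
    congr 1
    ext t
    congr 1
    ring
  have h2 : (∫ t in c - u..c, F (t - c)) + ∫ t in c..τ, F (t - c) =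
      ∫ t in c - u..τ, F (t - c) :=
    intervalIntegral.integral_add_adjacent_intervals (hint _ _) (hint _ _)
  have h3 : (∫ t in c - u..τ, F (t - c)) + ∫ t in τ..τ - u, F (t - c) =
      ∫ t in c - u..τ - u, F (t - c) :=
    intervalIntegral.integral_add_adjacent_intervals (hint _ _) (hint _ _)
  have h4 : (∫ t in τ..τ - u, F (t - c)) = -∫ t in τ - u..τ, F (t - c) :=
    intervalIntegral.integral_symm _ _
  rw [h1, ← h3, ← h2, h4]
  ring

section contlem
variable {S lam0 δ κ h : ℝ}

lemma cont_shifted_psi (hδ : 0 < δ) (hκ0 : 0 < κ) (c : ℝ) :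
    Continuous fun t : ℝ => psi δ κ (t - c) :=
  (psi_cont hδ hκ0).comp (continuous_id.sub continuous_const)

lemma cont_Gpsi (hδ : 0 < δ) (hκ0 : 0 < κ) (hS : 0 < S) (hlam0 : 0 < lam0) (c : ℝ) :
    Continuous fun t : ℝ => Gfun S lam0 h (psi δ κ (t - c)) := by
  have hψ := cont_shifted_psi (κ := κ) hδ hκ0 c
  have hlog : Continuous fun t : ℝ => Real.log (S * psi δ κ (t - c) + lam0) := by
    apply Continuous.log (by fun_prop)
    intro t
    have := psi_nonneg hδ hκ0 (t - c)
    positivity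
  unfold Gfun
  fun_prop

lemma cont_err (hδ : 0 < δ) (hκ0 : 0 < κ) (hS : 0 < S) (hlam0 : 0 < lam0) (c : ℝ) :
    Continuous fun t : ℝ => Real.log (S * psi δ κ (t - c) + lam0) := by
  have hψ := cont_shifted_psi (κ := κ) hδ hκ0 c
  apply Continuous.log (by fun_prop)
  intro t
  have := psi_nonneg hδ hκ0 (t - c)
  positivity

lemma cont_integrand (hδ : 0 < δ) (hκ0 : 0 < κ) (hS : 0 < S) (hlam0 : 0 < lam0)
    (hSh : 0 < S + h) (ϑ ϑ₀ : ℝ) :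
    Continuous fun t => (lamT S lam0 δ κ ϑ t / lamR S h lam0 δ κ ϑ₀ t - 1 -
      Real.log (lamT S lam0 δ κ ϑ t / lamR S h lam0 δ κ ϑ₀ t)) * lamR S h lam0 δ κ ϑ₀ t := by
  have hψ1 := cont_shifted_psi (κ := κ) hδ hκ0 ϑ
  have hψ2 := cont_shifted_psi (κ := κ) hδ hκ0 ϑ₀
  have hT : Continuous fun t => lamT S lam0 δ κ ϑ t := by unfold lamT; fun_prop
  have hR : Continuous fun t => lamR S h lam0 δ κ ϑ₀ t := by unfold lamR; fun_prop
  have hTpos : ∀ t, 0 < lamT S lam0 δ κ ϑ t := by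
    intro t; unfold lamT
    have := psi_nonneg hδ hκ0 (t - ϑ); positivity
  have hRpos : ∀ t, 0 < lamR S h lam0 δ κ ϑ₀ t := by
    intro t; unfold lamR
    have := mul_nonneg hSh.le (psi_nonneg hδ hκ0 (t - ϑ₀)); linarith
  have hdiv : Continuous fun t => lamT S lam0 δ κ ϑ t / lamR S h lam0 δ κ ϑ₀ t :=
    hT.div hR fun t => (hRpos t).ne'
  exact ((hdiv.sub continuous_const).sub
    (hdiv.log fun t => (div_pos (hTpos t) (hRpos t)).ne')).mul hR

end contlem

lemma key_bound {S lam0 δ κ τ ϑ₀ h : ℝ}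
    (hS : 0 < S) (hlam0 : 0 < lam0) (hδ : 0 < δ)
    (hκ0 : 0 < κ) (hκ1 : κ ≤ 1) (hSh : 0 < S + h)
    (hτϑ : ϑ₀ + δ < τ) {ϑ : ℝ}
    (hu2 : |ϑ - ϑ₀| < τ - δ - ϑ₀) :
    |JKL S h lam0 δ κ τ ϑ₀ ϑ - JKL S h lam0 δ κ τ ϑ₀ ϑ₀ -
        (ϑ - ϑ₀) * ((1 - lam0 / S * Real.log (1 + S / lam0)) * h)| ≤
      (S + 2 * |h| + 2 * ((S + h) * S / lam0)) * ((|ϑ - ϑ₀| / δ) ^ κ * |ϑ - ϑ₀|) := by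
  set u := ϑ - ϑ₀ with hu
  set Hol := (|u| / δ) ^ κ with hHol
  have hHol0 : 0 ≤ Hol := Real.rpow_nonneg (by positivity) κ
  have hϑ₀τ : ϑ₀ ≤ τ := by linarith
  -- names for integrands
  set f : ℝ → ℝ := fun t => (lamT S lam0 δ κ ϑ t / lamR S h lam0 δ κ ϑ₀ t - 1 -
      Real.log (lamT S lam0 δ κ ϑ t / lamR S h lam0 δ κ ϑ₀ t)) * lamR S h lam0 δ κ ϑ₀ t
    with hf
  set f0 : ℝ → ℝ := fun t => (lamT S lam0 δ κ ϑ₀ t / lamR S h lam0 δ κ ϑ₀ t - 1 -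
      Real.log (lamT S lam0 δ κ ϑ₀ t / lamR S h lam0 δ κ ϑ₀ t)) * lamR S h lam0 δ κ ϑ₀ t
    with hf0
  have hcf : Continuous f := cont_integrand hδ hκ0 hS hlam0 hSh ϑ ϑ₀
  have hcf0 : Continuous f0 := cont_integrand hδ hκ0 hS hlam0 hSh ϑ₀ ϑ₀
  set Gψ : ℝ → ℝ := fun x => Gfun S lam0 h (psi δ κ x) with hGψ
  have hcGϑ : Continuous fun t => Gψ (t - ϑ) := cont_Gpsi hδ hκ0 hS hlam0 ϑ
  have hcG0 : Continuous fun t => Gψ (t - ϑ₀) := cont_Gpsi hδ hκ0 hS hlam0 ϑ₀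
  set Err : ℝ → ℝ := fun t => ((S + h) / S) *
      ((S * psi δ κ (t - ϑ) + lam0) - (S * psi δ κ (t - ϑ₀) + lam0) -
        (S * psi δ κ (t - ϑ₀) + lam0) *
          (Real.log (S * psi δ κ (t - ϑ) + lam0) - Real.log (S * psi δ κ (t - ϑ₀) + lam0)))
    with hErr
  have hcErr : Continuous Err := by
    have h1 := cont_err (S := S) (lam0 := lam0) hδ hκ0 hS hlam0 ϑ
    have h2 := cont_err (S := S) (lam0 := lam0) hδ hκ0 hS hlam0 ϑ₀
    have h3 := cont_shifted_psi (κ := κ) hδ hκ0 ϑ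
    have h4 := cont_shifted_psi (κ := κ) hδ hκ0 ϑ₀
    unfold Err
    fun_prop
  -- pointwise identity
  have hpt : ∀ t, f t - f0 t = (Gψ (t - ϑ) - Gψ (t - ϑ₀)) + Err t := by
    intro t
    have := pointwise_id (h := h) hS hlam0 hSh
      (psi_nonneg hδ hκ0 (t - ϑ)) (psi_nonneg hδ hκ0 (t - ϑ₀))
    simp only [hf, hf0, lamT, lamR, hGψ, hErr]
    linarith [this]
  -- split J ϑ
  have hsplit : JKL S h lam0 δ κ τ ϑ₀ ϑ =
      (∫ t in (min ϑ ϑ₀)..ϑ₀, f t) + ∫ t in ϑ₀..τ, f t := by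
    rw [JKL, ← hf]
    exact (intervalIntegral.integral_add_adjacent_intervals
      (hcf.intervalIntegrable _ _) (hcf.intervalIntegrable _ _)).symm
  have hJ0 : JKL S h lam0 δ κ τ ϑ₀ ϑ₀ = ∫ t in ϑ₀..τ, f0 t := by
    rw [JKL, ← hf0, min_self]
  -- difference of main parts
  have hdiff : (∫ t in ϑ₀..τ, f t) - (∫ t in ϑ₀..τ, f0 t) =
      (∫ t in ϑ₀..τ, (Gψ (t - ϑ) - Gψ (t - ϑ₀))) + ∫ t in ϑ₀..τ, Err t := by
    rw [← intervalIntegral.integral_sub (hcf.intervalIntegrable _ _)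
      (hcf0.intervalIntegrable _ _)]
    rw [← intervalIntegral.integral_add (f := fun t => Gψ (t - ϑ) - Gψ (t - ϑ₀)) ((hcGϑ.sub hcG0).intervalIntegrable _ _)
      (hcErr.intervalIntegrable _ _)]
    exact intervalIntegral.integral_congr fun t _ => hpt t
  -- shift identity for Gψ
  have hGshift : (∫ t in ϑ₀..τ, (Gψ (t - ϑ) - Gψ (t - ϑ₀))) =
      (∫ t in ϑ₀ - u..ϑ₀, Gψ (t - ϑ₀)) - ∫ t in τ - u..τ, Gψ (t - ϑ₀) := by
    have hcont : Continuous Gψ := by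
      have := cont_Gpsi (h := h) hδ hκ0 hS hlam0 0
      simpa using this
    have hsh := shift_integral hcont ϑ₀ τ u
    have heq : (∫ t in ϑ₀..τ, Gψ (t - ϑ₀ - u)) = ∫ t in ϑ₀..τ, Gψ (t - ϑ) :=
      intervalIntegral.integral_congr fun t _ => by
        rw [show t - ϑ₀ - u = t - ϑ by rw [hu]; ring]
    rw [heq] at hsh
    rw [intervalIntegral.integral_sub (hcGϑ.intervalIntegrable _ _)
      (hcG0.intervalIntegrable _ _), hsh]
  -- leftover boundary piece at τ: exact value
  have hF7 : (∫ t in τ - u..τ, Gψ (t - ϑ₀)) = u * Gfun S lam0 h 1 := by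
    have hone : ∀ t ∈ Set.uIcc (τ - u) τ, Gψ (t - ϑ₀) = Gfun S lam0 h 1 := by
      intro t hmem
      have h1 : min (τ - u) τ ≤ t := hmem.1
      have h2 : τ - |u| ≤ t := by
        refine le_trans (le_min ?_ ?_) h1
        · linarith [le_abs_self u]
        · linarith [abs_nonneg u]
      have h3 : δ ≤ t - ϑ₀ := by linarith
      simp only [hGψ]; rw [psi_of_ge hδ hκ0 h3]
    rw [intervalIntegral.integral_congr hone, intervalIntegral.integral_const, smul_eq_mul]
    ring_nf
  -- leftover boundary piece at ϑ₀: small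
  have hF8 : |∫ t in ϑ₀ - u..ϑ₀, Gψ (t - ϑ₀)| ≤ 2 * |h| * Hol * |u| := by
    have := intervalIntegral.norm_integral_le_of_norm_le_const
      (C := 2 * |h| * Hol) (f := fun t => Gψ (t - ϑ₀)) (a := ϑ₀ - u) (b := ϑ₀) ?_
    · rw [Real.norm_eq_abs] at this
      have harg : |ϑ₀ - (ϑ₀ - u)| = |u| := by ring_nf
      rw [harg] at this
      linarith [this]
    · intro t hmem
      have h2 : t ≤ max (ϑ₀ - u) ϑ₀ := hmem.2
      have h3 : t - ϑ₀ ≤ |u| := by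
        have : max (ϑ₀ - u) ϑ₀ ≤ ϑ₀ + |u| :=
          max_le (by linarith [neg_abs_le u]) (by linarith [abs_nonneg u])
        linarith
      have hψle : psi δ κ (t - ϑ₀) ≤ Hol := by
        calc psi δ κ (t - ϑ₀) ≤ psi δ κ |u| := psi_mono hδ hκ0 h3
          _ ≤ (|(|u|)| / δ) ^ κ := psi_le_rpow hδ hκ0 _
          _ = Hol := by rw [abs_abs]
      rw [Real.norm_eq_abs]; simp only [hGψ]
      calc |Gfun S lam0 h (psi δ κ (t - ϑ₀))| ≤ 2 * |h| * psi δ κ (t - ϑ₀) :=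
            Gfun_abs_le hS hlam0 (psi_nonneg hδ hκ0 _)
        _ ≤ 2 * |h| * Hol := by
            have : (0:ℝ) ≤ 2 * |h| := by positivity
            nlinarith
  -- error integral bound
  have hpq : ∀ t : ℝ, |psi δ κ (t - ϑ) - psi δ κ (t - ϑ₀)| ≤ Hol := by
    intro t
    have := psi_holder hδ hκ0 hκ1 (t - ϑ) (t - ϑ₀)
    have harg : |t - ϑ - (t - ϑ₀)| = |u| := by
      rw [show t - ϑ - (t - ϑ₀) = -u by rw [hu]; ring, abs_neg]
    rwa [harg] at this
  have habsint : |∫ t in ϑ₀..τ, (psi δ κ (t - ϑ) - psi δ κ (t - ϑ₀))| ≤ 2 * |u| := by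
    have hcψ := psi_cont (δ := δ) (κ := κ) hδ hκ0
    have hsh := shift_integral hcψ ϑ₀ τ u
    have heq : (∫ t in ϑ₀..τ, psi δ κ (t - ϑ₀ - u)) = ∫ t in ϑ₀..τ, psi δ κ (t - ϑ) :=
      intervalIntegral.integral_congr fun t _ => by
        rw [show t - ϑ₀ - u = t - ϑ by rw [hu]; ring]
    rw [heq] at hsh
    have hsub : (∫ t in ϑ₀..τ, (psi δ κ (t - ϑ) - psi δ κ (t - ϑ₀))) =
        (∫ t in ϑ₀ - u..ϑ₀, psi δ κ (t - ϑ₀)) - ∫ t in τ - u..τ, psi δ κ (t - ϑ₀) := by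
      rw [intervalIntegral.integral_sub ((cont_shifted_psi hδ hκ0 ϑ).intervalIntegrable _ _)
        ((cont_shifted_psi hδ hκ0 ϑ₀).intervalIntegrable _ _), hsh]
    have hb1 : |∫ t in ϑ₀ - u..ϑ₀, psi δ κ (t - ϑ₀)| ≤ |u| := by
      have := intervalIntegral.norm_integral_le_of_norm_le_const (C := 1)
        (f := fun t => psi δ κ (t - ϑ₀)) (a := ϑ₀ - u) (b := ϑ₀)
        (fun t _ => by rw [Real.norm_eq_abs, abs_of_nonneg (psi_nonneg hδ hκ0 _)]
                       exact psi_le_one hδ hκ0 _)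
      rw [Real.norm_eq_abs] at this
      have harg : |ϑ₀ - (ϑ₀ - u)| = |u| := by ring_nf
      rw [harg] at this; linarith
    have hb2 : |∫ t in τ - u..τ, psi δ κ (t - ϑ₀)| ≤ |u| := by
      have := intervalIntegral.norm_integral_le_of_norm_le_const (C := 1)
        (f := fun t => psi δ κ (t - ϑ₀)) (a := τ - u) (b := τ)
        (fun t _ => by rw [Real.norm_eq_abs, abs_of_nonneg (psi_nonneg hδ hκ0 _)]
                       exact psi_le_one hδ hκ0 _)
      rw [Real.norm_eq_abs] at this
      have harg : |τ - (τ - u)| = |u| := by ring_nf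
      rw [harg] at this; linarith
    rw [hsub]
    calc |(∫ t in ϑ₀ - u..ϑ₀, psi δ κ (t - ϑ₀)) - ∫ t in τ - u..τ, psi δ κ (t - ϑ₀)| ≤
        |∫ t in ϑ₀ - u..ϑ₀, psi δ κ (t - ϑ₀)| + |∫ t in τ - u..τ, psi δ κ (t - ϑ₀)| :=
          abs_sub _ _
      _ ≤ 2 * |u| := by linarith
  have herrpt : ∀ t : ℝ, |Err t| ≤ ((S + h) * S / lam0) * Hol *
      |psi δ κ (t - ϑ) - psi δ κ (t - ϑ₀)| := by
    intro t
    have hb := err_bound hS hlam0 (psi_nonneg hδ hκ0 (t - ϑ)) (psi_nonneg hδ hκ0 (t - ϑ₀))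
    have hsq : (psi δ κ (t - ϑ) - psi δ κ (t - ϑ₀)) ^ 2 ≤
        Hol * |psi δ κ (t - ϑ) - psi δ κ (t - ϑ₀)| := by
      have h1 := hpq t
      have h2 : (psi δ κ (t - ϑ) - psi δ κ (t - ϑ₀)) ^ 2 =
          |psi δ κ (t - ϑ) - psi δ κ (t - ϑ₀)| * |psi δ κ (t - ϑ) - psi δ κ (t - ϑ₀)| := by
        rw [← abs_mul, abs_of_nonneg (by nlinarith [sq_nonneg (psi δ κ (t - ϑ) - psi δ κ (t - ϑ₀))] : (0:ℝ) ≤ (psi δ κ (t - ϑ) - psi δ κ (t - ϑ₀)) * (psi δ κ (t - ϑ) - psi δ κ (t - ϑ₀)))]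
        ring
      rw [h2]
      exact mul_le_mul_of_nonneg_right h1 (abs_nonneg _)
    simp only [hErr]; rw [abs_mul, abs_of_nonneg (by positivity : (0:ℝ) ≤ (S + h) / S)]
    calc (S + h) / S * |S * psi δ κ (t - ϑ) + lam0 - (S * psi δ κ (t - ϑ₀) + lam0) -
          (S * psi δ κ (t - ϑ₀) + lam0) * (Real.log (S * psi δ κ (t - ϑ) + lam0) -
            Real.log (S * psi δ κ (t - ϑ₀) + lam0))| ≤
        (S + h) / S * (S ^ 2 * (psi δ κ (t - ϑ) - psi δ κ (t - ϑ₀)) ^ 2 / lam0) := by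
          apply mul_le_mul_of_nonneg_left hb (by positivity)
      _ ≤ ((S + h) * S / lam0) * Hol * |psi δ κ (t - ϑ) - psi δ κ (t - ϑ₀)| := by
          have h3 : (S + h) / S * (S ^ 2 * (psi δ κ (t - ϑ) - psi δ κ (t - ϑ₀)) ^ 2 / lam0) =
              ((S + h) * S / lam0) * (psi δ κ (t - ϑ) - psi δ κ (t - ϑ₀)) ^ 2 := by
            field_simp
          rw [h3, mul_assoc]
          apply mul_le_mul_of_nonneg_left hsq (by positivity)
  -- error integral bound
  set C2 : ℝ := ((S + h) * S / lam0) * Hol with hC2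
  have hC20 : 0 ≤ C2 := by
    rw [hC2]; positivity
  have hF9 : |∫ t in ϑ₀..τ, Err t| ≤ 2 * ((S + h) * S / lam0) * Hol * |u| := by
    have hstep1 : |∫ t in ϑ₀..τ, Err t| ≤ ∫ t in ϑ₀..τ, |Err t| := by
      have := intervalIntegral.norm_integral_le_integral_norm
        (μ := MeasureTheory.volume) (f := Err) (a := ϑ₀) (b := τ) hϑ₀τ
      simpa [Real.norm_eq_abs] using this
    have hcabs : Continuous fun t => |Err t| := hcErr.abs
    have hcpq : Continuous fun t => C2 * |psi δ κ (t - ϑ) - psi δ κ (t - ϑ₀)| :=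
      (continuous_const.mul ((cont_shifted_psi hδ hκ0 ϑ).sub
        (cont_shifted_psi hδ hκ0 ϑ₀)).abs)
    have hstep2 : (∫ t in ϑ₀..τ, |Err t|) ≤
        ∫ t in ϑ₀..τ, C2 * |psi δ κ (t - ϑ) - psi δ κ (t - ϑ₀)| := by
      apply intervalIntegral.integral_mono_on hϑ₀τ (hcabs.intervalIntegrable _ _)
        (hcpq.intervalIntegrable _ _)
      intro t _
      simpa [hC2, mul_assoc] using herrpt t
    have hsign : (∫ t in ϑ₀..τ, |psi δ κ (t - ϑ) - psi δ κ (t - ϑ₀)|) ≤ 2 * |u| := by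
      rcases le_total ϑ ϑ₀ with hc | hc
      · have heqn : ∀ t ∈ Set.uIcc ϑ₀ τ, |psi δ κ (t - ϑ) - psi δ κ (t - ϑ₀)| =
            psi δ κ (t - ϑ) - psi δ κ (t - ϑ₀) := by
          intro t _
          exact abs_of_nonneg (by linarith [psi_mono hδ hκ0 (by linarith : t - ϑ₀ ≤ t - ϑ)])
        rw [intervalIntegral.integral_congr heqn]
        calc (∫ t in ϑ₀..τ, (psi δ κ (t - ϑ) - psi δ κ (t - ϑ₀))) ≤
            |∫ t in ϑ₀..τ, (psi δ κ (t - ϑ) - psi δ κ (t - ϑ₀))| := le_abs_self _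
          _ ≤ 2 * |u| := habsint
      · have heqn : ∀ t ∈ Set.uIcc ϑ₀ τ, |psi δ κ (t - ϑ) - psi δ κ (t - ϑ₀)| =
            -(psi δ κ (t - ϑ) - psi δ κ (t - ϑ₀)) := by
          intro t _
          exact abs_of_nonpos (by linarith [psi_mono hδ hκ0 (by linarith : t - ϑ ≤ t - ϑ₀)])
        rw [intervalIntegral.integral_congr heqn, intervalIntegral.integral_neg]
        calc -(∫ t in ϑ₀..τ, (psi δ κ (t - ϑ) - psi δ κ (t - ϑ₀))) ≤
            |∫ t in ϑ₀..τ, (psi δ κ (t - ϑ) - psi δ κ (t - ϑ₀))| := neg_le_abs _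
          _ ≤ 2 * |u| := habsint
    have hstep3 : (∫ t in ϑ₀..τ, C2 * |psi δ κ (t - ϑ) - psi δ κ (t - ϑ₀)|) ≤ C2 * (2 * |u|) := by
      rw [intervalIntegral.integral_const_mul]
      exact mul_le_mul_of_nonneg_left hsign hC20
    calc |∫ t in ϑ₀..τ, Err t| ≤ ∫ t in ϑ₀..τ, |Err t| := hstep1
      _ ≤ ∫ t in ϑ₀..τ, C2 * |psi δ κ (t - ϑ) - psi δ κ (t - ϑ₀)| := hstep2
      _ ≤ C2 * (2 * |u|) := hstep3
      _ = 2 * ((S + h) * S / lam0) * Hol * |u| := by rw [hC2]; ring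
  -- sliver bound
  have hF10 : |∫ t in (min ϑ ϑ₀)..ϑ₀, f t| ≤ S * Hol * |u| := by
    have hb := intervalIntegral.norm_integral_le_of_norm_le_const
      (C := S * Hol) (f := f) (a := min ϑ ϑ₀) (b := ϑ₀) ?_
    · rw [Real.norm_eq_abs] at hb
      have harg : |ϑ₀ - min ϑ ϑ₀| ≤ |u| := by
        rcases le_total ϑ ϑ₀ with hc | hc
        · rw [min_eq_left hc, abs_of_nonneg (by linarith)]
          rw [hu, abs_of_nonpos (by linarith : ϑ - ϑ₀ ≤ 0)]; linarith
        · rw [min_eq_right hc]; simp [abs_nonneg]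
      calc |∫ t in (min ϑ ϑ₀)..ϑ₀, f t| ≤ S * Hol * |ϑ₀ - min ϑ ϑ₀| := hb
        _ ≤ S * Hol * |u| := by
            apply mul_le_mul_of_nonneg_left harg (by positivity)
    · intro t hmem
      have ht2 : t ≤ ϑ₀ := by
        have := hmem.2
        have hmax : max (min ϑ ϑ₀) ϑ₀ = ϑ₀ := max_eq_right (min_le_right _ _)
        rwa [hmax] at this
      have hq0 : psi δ κ (t - ϑ₀) = 0 := psi_of_nonpos hδ hκ0 (by linarith)
      have hple : psi δ κ (t - ϑ) ≤ Hol := by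
        have h1 : t - ϑ ≤ |u| := by
          have := neg_abs_le u; rw [hu] at this ⊢; linarith
        calc psi δ κ (t - ϑ) ≤ psi δ κ |u| := psi_mono hδ hκ0 h1
          _ ≤ (|(|u|)| / δ) ^ κ := psi_le_rpow hδ hκ0 _
          _ = Hol := by rw [abs_abs]
      have hfval : f t = ((S * psi δ κ (t - ϑ) + lam0) / lam0 - 1 -
          Real.log ((S * psi δ κ (t - ϑ) + lam0) / lam0)) * lam0 := by
        simp only [hf, lamT, lamR, hq0, mul_zero, zero_add]
      rw [Real.norm_eq_abs, hfval]
      calc |((S * psi δ κ (t - ϑ) + lam0) / lam0 - 1 -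
          Real.log ((S * psi δ κ (t - ϑ) + lam0) / lam0)) * lam0| ≤ S * psi δ κ (t - ϑ) :=
            sliver_bound hS hlam0 (psi_nonneg hδ hκ0 _)
        _ ≤ S * Hol := mul_le_mul_of_nonneg_left hple hS.le
  -- assembly
  have hG1 := Gfun_one (h := h) hS hlam0
  have htotal : JKL S h lam0 δ κ τ ϑ₀ ϑ - JKL S h lam0 δ κ τ ϑ₀ ϑ₀ -
      u * ((1 - lam0 / S * Real.log (1 + S / lam0)) * h) =
      (∫ t in (min ϑ ϑ₀)..ϑ₀, f t) + (∫ t in ϑ₀ - u..ϑ₀, Gψ (t - ϑ₀)) +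
        ∫ t in ϑ₀..τ, Err t := by
    rw [hsplit, hJ0]
    have := hF7
    rw [hG1] at this
    linarith [hdiff, hGshift, this]
  rw [htotal]
  have habs3 : |(∫ t in (min ϑ ϑ₀)..ϑ₀, f t) + (∫ t in ϑ₀ - u..ϑ₀, Gψ (t - ϑ₀)) +
      ∫ t in ϑ₀..τ, Err t| ≤ |∫ t in (min ϑ ϑ₀)..ϑ₀, f t| +
        |∫ t in ϑ₀ - u..ϑ₀, Gψ (t - ϑ₀)| + |∫ t in ϑ₀..τ, Err t| := by
    have h1 := abs_add_le ((∫ t in (min ϑ ϑ₀)..ϑ₀, f t) + (∫ t in ϑ₀ - u..ϑ₀, Gψ (t - ϑ₀)))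
      (∫ t in ϑ₀..τ, Err t)
    have h2 := abs_add_le (∫ t in (min ϑ ϑ₀)..ϑ₀, f t) (∫ t in ϑ₀ - u..ϑ₀, Gψ (t - ϑ₀))
    linarith
  calc |(∫ t in (min ϑ ϑ₀)..ϑ₀, f t) + (∫ t in ϑ₀ - u..ϑ₀, Gψ (t - ϑ₀)) +
      ∫ t in ϑ₀..τ, Err t| ≤ |∫ t in (min ϑ ϑ₀)..ϑ₀, f t| +
        |∫ t in ϑ₀ - u..ϑ₀, Gψ (t - ϑ₀)| + |∫ t in ϑ₀..τ, Err t| := habs3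
    _ ≤ S * Hol * |u| + 2 * |h| * Hol * |u| + 2 * ((S + h) * S / lam0) * Hol * |u| := by
        linarith [hF8, hF9, hF10]
    _ = (S + 2 * |h| + 2 * ((S + h) * S / lam0)) * (Hol * |u|) := by ring

theorem stmt_4 (S lam0 δ τ κ α β ϑ₀ h : ℝ)
    (hS : 0 < S) (hlam0 : 0 < lam0) (hδ : 0 < δ) (hτ : 0 < τ)
    (hκ : κ ∈ Set.Ioo (0 : ℝ) (1 / 2)) (hαβ : α < β)
    (hΘ : Set.Ioo (α - δ) (β + δ) ⊆ Set.Ioo 0 (τ - δ))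
    (hϑ₀ : ϑ₀ ∈ Set.Ioo α β)
    (hH : S / Real.log (1 + S / lam0) - S - lam0 < h) :
    HasDerivAt (JKL S h lam0 δ κ τ ϑ₀)
        ((1 - (lam0 / S) * Real.log (1 + S / lam0)) * h) ϑ₀ ∧
      0 < 1 - (lam0 / S) * Real.log (1 + S / lam0) ∧
      (∫ x in (0 : ℝ)..1, S * κ * x ^ (κ - 1) * (h * x ^ κ) / (S * x ^ κ + lam0)) =
        h * (1 - (lam0 / S) * Real.log (1 + S / lam0)) := by
  obtain ⟨hκ0, hκhalf⟩ := hκ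
  have hκ1 : κ ≤ 1 := by linarith
  -- basic log facts
  have h1S : (1:ℝ) < 1 + S / lam0 := by
    have : 0 < S / lam0 := by positivity
    linarith
  have hlogpos : 0 < Real.log (1 + S / lam0) := Real.log_pos h1S
  have hloglt : Real.log (1 + S / lam0) < S / lam0 := by
    have := Real.log_lt_sub_one_of_pos (by linarith : (0:ℝ) < 1 + S / lam0) (by linarith)
    linarith
  have hApos : 0 < 1 - lam0 / S * Real.log (1 + S / lam0) := by
    have h1 : lam0 / S * Real.log (1 + S / lam0) < lam0 / S * (S / lam0) :=
      mul_lt_mul_of_pos_left hloglt (by positivity)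
    have h2 : lam0 / S * (S / lam0) = 1 := by field_simp
    linarith
  have hSh : 0 < S + h := by
    have h1 : lam0 * Real.log (1 + S / lam0) < S := by
      have := mul_lt_mul_of_pos_left hloglt hlam0
      have h2 : lam0 * (S / lam0) = S := by field_simp
      linarith
    have h3 : lam0 < S / Real.log (1 + S / lam0) := by
      rw [lt_div_iff₀ hlogpos]; linarith
    linarith
  -- geometry
  have hβτ : β + δ ≤ τ - δ :=
    ((Set.Ioo_subset_Ioo_iff (by linarith : α - δ < β + δ)).1 hΘ).2
  have hτϑ : ϑ₀ + δ < τ := by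
    obtain ⟨hα, hβ⟩ := hϑ₀
    linarith
  refine ⟨?_, hApos, ?_⟩
  · -- derivative
    rw [hasDerivAt_iff_isLittleO]
    rw [Asymptotics.isLittleO_iff]
    intro c hc
    set K := S + 2 * |h| + 2 * ((S + h) * S / lam0) with hK
    have htend : Filter.Tendsto (fun ϑ' => K * ((|ϑ' - ϑ₀| / δ) ^ κ)) (nhds ϑ₀) (nhds 0) := by
      have hc : Continuous fun ϑ' : ℝ => |ϑ' - ϑ₀| / δ := by fun_prop
      have hin : Filter.Tendsto (fun ϑ' : ℝ => |ϑ' - ϑ₀| / δ) (nhds ϑ₀) (nhds 0) := by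
        simpa using hc.tendsto ϑ₀
      have hout : Filter.Tendsto (fun y : ℝ => y ^ κ) (nhds 0) (nhds 0) := by
        have hcont : ContinuousAt (fun y : ℝ => y ^ κ) 0 :=
          Real.continuousAt_rpow_const _ _ (Or.inr hκ0.le)
        simpa [Real.zero_rpow hκ0.ne'] using hcont.tendsto
      simpa using (hout.comp hin).const_mul K
    have hev1 : ∀ᶠ ϑ' in nhds ϑ₀, K * ((|ϑ' - ϑ₀| / δ) ^ κ) < c :=
      htend.eventually_lt_const hc
    have hev2 : ∀ᶠ ϑ' in nhds ϑ₀, |ϑ' - ϑ₀| < τ - δ - ϑ₀ :=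
      eventually_abs_sub_lt ϑ₀ (by linarith)
    filter_upwards [hev1, hev2] with ϑ' h1 h2
    rw [Real.norm_eq_abs, Real.norm_eq_abs, smul_eq_mul]
    have hb := key_bound hS hlam0 hδ hκ0 hκ1 hSh hτϑ h2
    calc |JKL S h lam0 δ κ τ ϑ₀ ϑ' - JKL S h lam0 δ κ τ ϑ₀ ϑ₀ -
        (ϑ' - ϑ₀) * ((1 - lam0 / S * Real.log (1 + S / lam0)) * h)| ≤
          K * ((|ϑ' - ϑ₀| / δ) ^ κ * |ϑ' - ϑ₀|) := hb
      _ = (K * ((|ϑ' - ϑ₀| / δ) ^ κ)) * |ϑ' - ϑ₀| := by ring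
      _ ≤ c * |ϑ' - ϑ₀| := mul_le_mul_of_nonneg_right h1.le (abs_nonneg _)
  · -- the explicit integral
    set Fant : ℝ → ℝ := fun x => h * x ^ κ -
      (h * lam0 / S) * (Real.log (S * x ^ κ + lam0) - Real.log lam0) with hFant
    have hcx : Continuous fun x : ℝ => x ^ κ := by
      rw [continuous_iff_continuousAt]
      intro x
      exact Real.continuousAt_rpow_const _ _ (Or.inr hκ0.le)
    have hposin : ∀ x ∈ Set.Icc (0:ℝ) 1, 0 < S * x ^ κ + lam0 := by
      intro x hx
      have : 0 ≤ x ^ κ := Real.rpow_nonneg hx.1 κ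
      nlinarith
    have hcont : ContinuousOn Fant (Set.Icc 0 1) := by
      apply ContinuousOn.sub (hcx.continuousOn.const_smul h |>.congr ?_)
      · apply ContinuousOn.mul continuousOn_const
        apply ContinuousOn.sub _ continuousOn_const
        apply ContinuousOn.log
        · exact (continuous_const.mul hcx |>.add continuous_const).continuousOn
        · intro x hx; exact (hposin x hx).ne'
      · intro x _; simp [smul_eq_mul]
    have hderiv : ∀ x ∈ Set.Ioo (0:ℝ) 1, HasDerivWithinAt Fant
        (S * κ * x ^ (κ - 1) * (h * x ^ κ) / (S * x ^ κ + lam0)) (Set.Ioi x) x := by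
      intro x hx
      obtain ⟨hx0, hx1⟩ := hx
      have hxκ : 0 < x ^ κ := Real.rpow_pos_of_pos hx0 κ
      have hden : 0 < S * x ^ κ + lam0 := by nlinarith
      have hrp : HasDerivAt (fun y : ℝ => y ^ κ) (κ * x ^ (κ - 1)) x :=
        Real.hasDerivAt_rpow_const (Or.inl hx0.ne')
      have hin : HasDerivAt (fun y : ℝ => S * y ^ κ + lam0) (S * (κ * x ^ (κ - 1))) x :=
        (hrp.const_mul S).add_const lam0
      have hlog : HasDerivAt (fun y : ℝ => Real.log (S * y ^ κ + lam0))
          (S * (κ * x ^ (κ - 1)) / (S * x ^ κ + lam0)) x := hin.log hden.ne'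
      have htot : HasDerivAt Fant
          (h * (κ * x ^ (κ - 1)) -
            (h * lam0 / S) * (S * (κ * x ^ (κ - 1)) / (S * x ^ κ + lam0))) x := by
        rw [hFant]
        exact (hrp.const_mul h).sub (((hlog.sub_const (Real.log lam0)).const_mul (h * lam0 / S)))
      have heq : h * (κ * x ^ (κ - 1)) -
          (h * lam0 / S) * (S * (κ * x ^ (κ - 1)) / (S * x ^ κ + lam0)) =
          S * κ * x ^ (κ - 1) * (h * x ^ κ) / (S * x ^ κ + lam0) := by
        have hxm1 : x ^ (κ - 1) = x ^ κ / x := Real.rpow_sub_one hx0.ne' κ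
        rw [hxm1]
        field_simp
        ring
      rw [heq] at htot
      exact htot.hasDerivWithinAt
    have hint : IntervalIntegrable
        (fun x => S * κ * x ^ (κ - 1) * (h * x ^ κ) / (S * x ^ κ + lam0)) volume 0 1 := by
      have hri : IntervalIntegrable (fun x : ℝ => (S * κ * |h| / lam0) * x ^ (2 * κ - 1))
          volume 0 1 :=
        (intervalIntegral.intervalIntegrable_rpow' (by linarith : (-1:ℝ) < 2 * κ - 1)).const_mul _
      apply hri.mono_fun
      · apply Measurable.aestronglyMeasurable
        apply Measurable.div
        · fun_prop
        · fun_prop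
      · rw [Filter.EventuallyLE, ae_restrict_iff' measurableSet_uIoc]
        apply Filter.Eventually.of_forall
        intro x hx
        rw [Set.uIoc_of_le (by norm_num : (0:ℝ) ≤ 1)] at hx
        obtain ⟨hx0, hx1⟩ := hx
        have hxκ : 0 < x ^ κ := Real.rpow_pos_of_pos hx0 κ
        have hxκ1 : 0 < x ^ (κ - 1) := Real.rpow_pos_of_pos hx0 _
        have hden : 0 < S * x ^ κ + lam0 := by nlinarith
        have hprod : x ^ (κ - 1) * x ^ κ = x ^ (2 * κ - 1) := by
          rw [← Real.rpow_add hx0]; ring_nf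
        simp only [Real.norm_eq_abs]
        rw [abs_div, abs_of_pos hden]
        rw [abs_of_nonneg (by positivity : (0:ℝ) ≤ (S * κ * |h| / lam0) * x ^ (2 * κ - 1))]
        have hnum : |S * κ * x ^ (κ - 1) * (h * x ^ κ)| = S * κ * |h| * x ^ (2 * κ - 1) := by
          rw [abs_mul, abs_mul, abs_mul, abs_mul, abs_of_pos hS, abs_of_pos hκ0,
            abs_of_pos hxκ1, abs_of_pos hxκ]
          rw [show S * κ * x ^ (κ - 1) * (|h| * x ^ κ) =
            S * κ * |h| * (x ^ (κ - 1) * x ^ κ) by ring, hprod]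
        rw [hnum]
        rw [div_le_iff₀ hden]
        have hx2κ : 0 ≤ x ^ (2 * κ - 1) := by positivity
        have : S * κ * |h| / lam0 * x ^ (2 * κ - 1) * lam0 ≤
            S * κ * |h| / lam0 * x ^ (2 * κ - 1) * (S * x ^ κ + lam0) := by
          apply mul_le_mul_of_nonneg_left (by nlinarith [mul_pos hS hxκ]) (by positivity)
        have heq2 : S * κ * |h| / lam0 * x ^ (2 * κ - 1) * lam0 =
            S * κ * |h| * x ^ (2 * κ - 1) := by field_simp
        linarith
    have hftc := intervalIntegral.integral_eq_sub_of_hasDeriv_right_of_le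
      (by norm_num : (0:ℝ) ≤ 1) hcont hderiv hint
    rw [hftc]
    have h0 : Fant 0 = 0 := by
      rw [hFant]
      simp [Real.zero_rpow hκ0.ne']
    have h1 : Fant 1 = h * (1 - lam0 / S * Real.log (1 + S / lam0)) := by
      rw [hFant]
      simp only [Real.one_rpow, mul_one]
      rw [show (1:ℝ) + S / lam0 = (S * 1 + lam0) / lam0 by field_simp; ring,
        Real.log_div (by nlinarith) hlam0.ne']
      ring
    rw [h0, h1]
    ring
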